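/- Let R be a commutative Noetherian ring and M a finitely generated R-module, and let 𝒰 be a non-principal ultrafilter on ℕ. Then the natural map M ⊗_R R* → M* is an isomorphism, where R* and M* denote the ultrapowers of R and M with respect to 𝒰. -/

import Mathlib

open Filter TensorProduct

/-- The natural map `M ⊗_R R* → M*` sending `x ⊗ ulim_m r_m` to `ulim_m (r_m • x)`,
where `R*` and `M*` are the ultrapowers (germs at the ultrafilter `𝒰`). -/
noncomputable def natUltraMap (𝒰 : Ultrafilter ℕ) (R M : Type*) [CommRing R]
    [AddCommGroup M] [Module R M] :
    M ⊗[R] ((𝒰 : Filter ℕ).Germ R) →ₗ[R] (𝒰 : Filter ℕ).Germ M :=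
  TensorProduct.lift <| LinearMap.mk₂ R
    (fun x c => c • ((fun _ => x : ℕ → M) : (𝒰 : Filter ℕ).Germ M))
    (fun x y c => by
      show c • ((fun _ => x + y : ℕ → M) : (𝒰 : Filter ℕ).Germ M)
          = c • ((fun _ => x : ℕ → M) : (𝒰 : Filter ℕ).Germ M)
            + c • ((fun _ => y : ℕ → M) : (𝒰 : Filter ℕ).Germ M)
      have h : ((fun _ => x + y : ℕ → M) : (𝒰 : Filter ℕ).Germ M)
          = ((fun _ => x : ℕ → M) : (𝒰 : Filter ℕ).Germ M)
            + ((fun _ => y : ℕ → M) : (𝒰 : Filter ℕ).Germ M) := rfl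
      rw [h, smul_add])
    (fun r x c => by
      refine Filter.Germ.inductionOn c fun g => ?_
      exact congrArg Filter.Germ.ofFun (funext fun m => smul_comm (g m) r x))
    (fun x c c' => add_smul c c' _)
    (fun r x c => by
      refine Filter.Germ.inductionOn c fun g => ?_
      exact congrArg Filter.Germ.ofFun (funext fun m => (smul_smul r (g m) x).symm))

namespace NatUltraAux

variable (𝒰 : Ultrafilter ℕ) (R : Type*) [CommRing R]
variable {M N : Type*} [AddCommGroup M] [Module R M] [AddCommGroup N] [Module R N]

/-- The germ of a linear map, as a linear map between germ modules. -/
noncomputable def germMap (f : M →ₗ[R] N) :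
    (𝒰 : Filter ℕ).Germ M →ₗ[R] (𝒰 : Filter ℕ).Germ N where
  toFun := Filter.Germ.map f
  map_add' a b := Filter.Germ.inductionOn₂ a b fun a b =>
    congrArg Filter.Germ.ofFun (funext fun m => f.map_add (a m) (b m))
  map_smul' r a := Filter.Germ.inductionOn a fun a =>
    congrArg Filter.Germ.ofFun (funext fun m => f.map_smul r (a m))

lemma germMap_ofFun (f : M →ₗ[R] N) (g : ℕ → M) :
    germMap 𝒰 R f (Filter.Germ.ofFun g) = Filter.Germ.ofFun (fun m => f (g m)) := rfl

lemma natUltraMap_tmul (x : M) (g : ℕ → R) :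
    natUltraMap 𝒰 R M (x ⊗ₜ[R] (Filter.Germ.ofFun g))
      = Filter.Germ.ofFun (fun m => g m • x) := rfl

lemma naturality (f : M →ₗ[R] N) (t : M ⊗[R] ((𝒰 : Filter ℕ).Germ R)) :
    natUltraMap 𝒰 R N (f.rTensor _ t) = germMap 𝒰 R f (natUltraMap 𝒰 R M t) := by
  induction t with
  | zero => simp
  | tmul x c =>
      refine Filter.Germ.inductionOn c fun g => ?_
      rw [LinearMap.rTensor_tmul]
      show natUltraMap 𝒰 R N (f x ⊗ₜ[R] (Filter.Germ.ofFun g)) = _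
      rw [natUltraMap_tmul, natUltraMap_tmul, germMap_ofFun]
      exact congrArg Filter.Germ.ofFun (funext fun m => (f.map_smul (g m) x).symm)
  | add s t hs ht => simp [map_add, hs, ht]

variable (n : ℕ)

/-- The inverse of `natUltraMap` for the free module `Fin n → R`. -/
noncomputable def freeInv :
    (𝒰 : Filter ℕ).Germ (Fin n → R) →ₗ[R] (Fin n → R) ⊗[R] ((𝒰 : Filter ℕ).Germ R) :=
  ∑ i : Fin n, (TensorProduct.mk R (Fin n → R) ((𝒰 : Filter ℕ).Germ R)
      (Pi.single i 1)).comp (germMap 𝒰 R (LinearMap.proj i))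

lemma freeInv_ofFun (h : ℕ → (Fin n → R)) :
    freeInv 𝒰 R n (Filter.Germ.ofFun h)
      = ∑ i : Fin n, (Pi.single i 1 : Fin n → R) ⊗ₜ[R]
          (Filter.Germ.ofFun (fun m => h m i)) := by
  simp only [freeInv, LinearMap.coe_sum, LinearMap.coe_comp, Function.comp_apply,
    Finset.sum_apply]
  rfl

lemma germ_sum {ι : Type*} (s : Finset ι) (f : ι → ℕ → M) :
    (∑ i ∈ s, Filter.Germ.ofFun (l := (𝒰 : Filter ℕ)) (f i))
      = Filter.Germ.ofFun (fun m => ∑ i ∈ s, f i m) := by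
  classical
  induction s using Finset.induction with
  | empty =>
      refine (Filter.Germ.coe_zero (l := (𝒰 : Filter ℕ))).symm.trans ?_
      exact congrArg Filter.Germ.ofFun (funext fun m => Finset.sum_empty.symm)
  | insert _ _ hx ih =>
      rw [Finset.sum_insert hx, ih]
      exact congrArg Filter.Germ.ofFun (funext fun m => by
        rw [Finset.sum_insert hx])

lemma free_left_inv (t : (Fin n → R) ⊗[R] ((𝒰 : Filter ℕ).Germ R)) :
    freeInv 𝒰 R n (natUltraMap 𝒰 R (Fin n → R) t) = t := by
  induction t with
  | zero => simp
  | tmul v c =>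
      refine Filter.Germ.inductionOn c fun g => ?_
      rw [natUltraMap_tmul, freeInv_ofFun]
      have h1 : ∀ i : Fin n, Filter.Germ.ofFun (l := (𝒰 : Filter ℕ)) (fun m => (g m • v) i)
          = v i • Filter.Germ.ofFun g := fun i =>
        congrArg Filter.Germ.ofFun (funext fun m => mul_comm (g m) (v i))
      calc ∑ i : Fin n, (Pi.single i 1 : Fin n → R) ⊗ₜ[R]
              (Filter.Germ.ofFun (fun m => (g m • v) i))
          = ∑ i : Fin n, (v i • (Pi.single i 1 : Fin n → R)) ⊗ₜ[R]
              (Filter.Germ.ofFun g : (𝒰 : Filter ℕ).Germ R) := by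
            refine Finset.sum_congr rfl fun i _ => ?_
            rw [h1 i, TensorProduct.smul_tmul]
        _ = (∑ i : Fin n, v i • (Pi.single i 1 : Fin n → R)) ⊗ₜ[R]
              (Filter.Germ.ofFun g : (𝒰 : Filter ℕ).Germ R) := by
            rw [TensorProduct.sum_tmul]
        _ = v ⊗ₜ[R] _ := by
            congr 1
            refine funext fun j => ?_
            simp [Pi.single_apply, Finset.sum_apply]
  | add s t hs ht => rw [map_add, map_add, hs, ht]

lemma free_right_inv (c : (𝒰 : Filter ℕ).Germ (Fin n → R)) :
    natUltraMap 𝒰 R (Fin n → R) (freeInv 𝒰 R n c) = c := by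
  refine Filter.Germ.inductionOn c fun h => ?_
  rw [freeInv_ofFun, map_sum]
  have : ∀ i : Fin n, natUltraMap 𝒰 R (Fin n → R)
      ((Pi.single i 1 : Fin n → R) ⊗ₜ[R] (Filter.Germ.ofFun (fun m => h m i)))
      = Filter.Germ.ofFun (fun m => (h m i) • (Pi.single i 1 : Fin n → R)) :=
    fun i => natUltraMap_tmul 𝒰 R _ _
  rw [Finset.sum_congr rfl fun i _ => this i, germ_sum]
  refine congrArg Filter.Germ.ofFun (funext fun m => funext fun j => ?_)
  simp [Pi.single_apply, Finset.sum_apply]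

lemma free_bijective : Function.Bijective (natUltraMap 𝒰 R (Fin n → R)) := by
  constructor
  · intro a b hab
    have := congrArg (freeInv 𝒰 R n) hab
    rwa [free_left_inv, free_left_inv] at this
  · intro c
    exact ⟨freeInv 𝒰 R n c, free_right_inv 𝒰 R n c⟩

end NatUltraAux

open NatUltraAux in
/-- For a Noetherian ring `R` and a finitely generated `R`-module `M`, the natural
map `M ⊗_R R* → M*` is an isomorphism. -/
theorem natUltraMap_bijective (𝒰 : Ultrafilter ℕ) (h𝒰 : ∀ A : Set ℕ, A.Finite → A ∉ 𝒰)
    (R M : Type*) [CommRing R] [IsNoetherianRing R] [AddCommGroup M] [Module R M]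
    [Module.Finite R M] :
    Function.Bijective (natUltraMap 𝒰 R M) := by
  classical
  obtain ⟨n, π, hπ⟩ := Module.Finite.exists_fin' R M
  -- the kernel of π is finitely generated since R is Noetherian
  have : Module.Finite R (LinearMap.ker π) := by
    have : IsNoetherian R (Fin n → R) := inferInstance
    exact Module.Finite.iff_fg.mpr (IsNoetherian.noetherian _)
  obtain ⟨p, σ, hσ⟩ := Module.Finite.exists_fin' R (LinearMap.ker π)
  set j : (Fin p → R) →ₗ[R] (Fin n → R) := (LinearMap.ker π).subtype.comp σ with hj
  constructor
  · -- injectivity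
    intro a b hab
    suffices h0 : ∀ t : M ⊗[R] ((𝒰 : Filter ℕ).Germ R), natUltraMap 𝒰 R M t = 0 → t = 0 by
      have := h0 (a - b) (by rw [map_sub, hab, sub_self])
      exact sub_eq_zero.mp this
    intro t ht
    obtain ⟨s, rfl⟩ := LinearMap.rTensor_surjective ((𝒰 : Filter ℕ).Germ R) hπ t
    obtain ⟨h, hh⟩ : ∃ h : ℕ → (Fin n → R),
        natUltraMap 𝒰 R (Fin n → R) s = Filter.Germ.ofFun h :=
      Filter.Germ.inductionOn (natUltraMap 𝒰 R (Fin n → R) s) fun h => ⟨h, rfl⟩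
    have hzero : Filter.Germ.ofFun (l := (𝒰 : Filter ℕ)) (fun m => π (h m)) = 0 := by
      rw [← germMap_ofFun 𝒰 R π h, ← hh, ← naturality, ht]
    have hmem : ∀ᶠ m in (𝒰 : Filter ℕ), π (h m) = 0 := by
      have := Filter.Germ.coe_eq.mp hzero
      exact this
    -- choose coefficients in the kernel
    have choice : ∀ m : ℕ, ∃ b : Fin p → R, π (h m) = 0 → j b = h m := by
      intro m
      by_cases hm : π (h m) = 0
      · obtain ⟨b, hb⟩ := hσ ⟨h m, LinearMap.mem_ker.mpr hm⟩
        exact ⟨b, fun _ => by simp [hj, hb]⟩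
      · exact ⟨0, fun h' => absurd h' hm⟩
    choose b hb using choice
    have heq : Filter.Germ.ofFun (l := (𝒰 : Filter ℕ)) h
        = Filter.Germ.ofFun (fun m => j (b m)) := by
      refine Filter.Germ.coe_eq.mpr ?_
      filter_upwards [hmem] with m hm
      exact (hb m hm).symm
    -- pull back: s equals the image of an element of (Fin p → R) ⊗ R*
    set s' : (Fin n → R) ⊗[R] ((𝒰 : Filter ℕ).Germ R) :=
      j.rTensor _ (freeInv 𝒰 R p (Filter.Germ.ofFun b)) with hs'
    have hss' : s = s' := by
      apply (free_bijective 𝒰 R n).1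
      rw [hh, hs', naturality, free_right_inv, germMap_ofFun, heq]
    rw [hss', hs', ← LinearMap.rTensor_comp_apply]
    have hcomp : π.comp j = 0 := by
      ext v
      simp [hj]
    rw [hcomp]
    simp
  · -- surjectivity
    intro c
    refine Filter.Germ.inductionOn c fun g => ?_
    have choice : ∀ m : ℕ, ∃ v : Fin n → R, π v = g m := fun m => hπ (g m)
    choose h hh using choice
    refine ⟨π.rTensor _ (freeInv 𝒰 R n (Filter.Germ.ofFun h)), ?_⟩
    rw [naturality, free_right_inv, germMap_ofFun]
    exact congrArg Filter.Germ.ofFun (funext hh)
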